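/- Call a finite word ω over D neutral if red(ω) = 1, negative if red(ω) is a nonempty product of symbols from D_α only, and positive if red(ω) is a nonempty product of symbols from D_β only. If ω is neutral, negative or positive, then for every n ∈ ℕ the n-fold concatenation ω^n is an admissible word of Σ_D (it appears in some element of Σ_D); moreover, the bi-infinite periodic sequence x defined by x_{i} = ω_{(i mod |ω|)+1} for all i ∈ ℤ belongs to Σ_D. -/

import Mathlib

open MeasureTheory Topology Filter
open scoped ENNReal NNReal


/-! ### The alphabet of the (M,N) Dyck–Motzkin shift -/

/-- The alphabet `D = D_α ∪ D_0 ∪ D_β` of the `(M,N)` Dyck–Motzkin shift: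
`la k` is the left bracket `α_k`, `u k` is the unit `1_k`, `ra k` is the right bracket `β_k`. -/
inductive DMSym (M N : ℕ) : Type where
  | la : Fin M → DMSym M N
  | u  : Fin N → DMSym M N
  | ra : Fin M → DMSym M N
deriving DecidableEq

namespace DMSym

def equivSum (M N : ℕ) : DMSym M N ≃ (Fin M ⊕ Fin N ⊕ Fin M) where
  toFun s := match s with
    | .la k => Sum.inl k
    | .u k => Sum.inr (Sum.inl k)
    | .ra k => Sum.inr (Sum.inr k)
  invFun s := match s with
    | Sum.inl k => .la k
    | Sum.inr (Sum.inl k) => .u k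
    | Sum.inr (Sum.inr k) => .ra k
  left_inv s := by cases s <;> rfl
  right_inv s := by rcases s with k | k | k <;> rfl

instance (M N : ℕ) : Fintype (DMSym M N) := Fintype.ofEquiv _ (equivSum M N).symm
instance (M N : ℕ) : TopologicalSpace (DMSym M N) := ⊥
instance (M N : ℕ) : DiscreteTopology (DMSym M N) := ⟨rfl⟩
instance (M N : ℕ) : MeasurableSpace (DMSym M N) := ⊤
instance (M N : ℕ) : BorelSpace (DMSym M N) := ⟨borel_eq_top_of_discrete.symm⟩

end DMSym

/-- Nonzero elements of the Dyck–Motzkin monoid with zero are represented in normal form: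
`some (bs, as)` is the reduced word `β_{bs(0)} ⋯ β_{bs(r)} α_{as(0)} ⋯ α_{as(s)}`
(in particular `some ([], [])` is the unit element `1`); `none` is the zero element `0`. -/
abbrev DyckElem (M : ℕ) := Option (List (Fin M) × List (Fin M))

/-- Multiplication, in the Dyck–Motzkin monoid with zero, of an element in normal form on
the right by a generator: units are absorbed, a left bracket is appended, and a right bracket
either closes the last left bracket (if the indices match), is appended (if there is no left
bracket to close), or produces the zero element (if the indices do not match). -/
def dyckStep {M N : ℕ} : DyckElem M → DMSym M N → DyckElem M
  | none, _ => none
  | some (bs, as), .la k => some (bs, as ++ [k])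
  | some (bs, as), .u _ => some (bs, as)
  | some (bs, as), .ra k =>
      match as.getLast? with
      | none => some (bs ++ [k], [])
      | some j => if j = k then some (bs, as.dropLast) else none

/-- `red w` is the image of the word `w` in the Dyck–Motzkin monoid with zero. -/
def red {M N : ℕ} (w : List (DMSym M N)) : DyckElem M :=
  w.foldl dyckStep (some ([], []))

/-- The word `x_j x_{j+1} ⋯ x_k` read off a bi-infinite sequence `x`. -/
def wordAt {M N : ℕ} (x : ℤ → DMSym M N) (j k : ℤ) : List (DMSym M N) :=
  (List.range (k + 1 - j).toNat).map fun n => x (j + n)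

/-- The `(M,N)` Dyck–Motzkin shift `Σ_D`. -/
def SigmaD (M N : ℕ) : Set (ℤ → DMSym M N) :=
  {x | ∀ j k : ℤ, j < k → red (wordAt x j k) ≠ none}

/-- The left shift `σ`. -/
def shift {A : Type*} : (ℤ → A) → (ℤ → A) := fun x i => x (i + 1)

/-- The inverse `σ⁻¹` of the left shift. -/
def shiftInv {A : Type*} : (ℤ → A) → (ℤ → A) := fun x i => x (i - 1)

lemma wordAt_shift {M N : ℕ} (x : ℤ → DMSym M N) (j k : ℤ) :
    wordAt (shift x) j k = wordAt x (j + 1) (k + 1) := by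
  simp only [wordAt, shift]
  rw [show (k + 1 + 1 - (j + 1) : ℤ) = k + 1 - j by ring]
  exact List.map_congr_left fun n _ => by rw [show (j + n + 1 : ℤ) = j + 1 + n by ring]

lemma shift_mem_SigmaD {M N : ℕ} {x : ℤ → DMSym M N} (hx : x ∈ SigmaD M N) :
    shift x ∈ SigmaD M N := by
  intro j k hjk
  rw [wordAt_shift]
  exact hx (j + 1) (k + 1) (by omega)

/-- The left shift acting on `Σ_D`. -/
def shiftD (M N : ℕ) : ↥(SigmaD M N) → ↥(SigmaD M N) :=
  fun x => ⟨shift x.val, shift_mem_SigmaD x.property⟩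

/-- A word is neutral if it reduces to the unit element of the Dyck–Motzkin monoid. -/
def NeutralWord {M N : ℕ} (w : List (DMSym M N)) : Prop := red w = some ([], [])

/-- A word is negative if it reduces to a nonempty product of left-bracket symbols only. -/
def NegativeWord {M N : ℕ} (w : List (DMSym M N)) : Prop :=
  ∃ as : List (Fin M), as ≠ [] ∧ red w = some ([], as)

/-- A word is positive if it reduces to a nonempty product of right-bracket symbols only. -/
def PositiveWord {M N : ℕ} (w : List (DMSym M N)) : Prop :=
  ∃ bs : List (Fin M), bs ≠ [] ∧ red w = some (bs, [])

/-- A word is admissible for `Σ_D` if it occurs as a consecutive block in some element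
of `Σ_D`. -/
def AdmissibleWord (M N : ℕ) (w : List (DMSym M N)) : Prop :=
  ∃ x ∈ SigmaD M N, ∃ j : ℤ, ∀ i : Fin w.length, x (j + (i : ℕ)) = w.get i

/-- The bi-infinite periodic sequence `x_i = w_{(i mod |w|) + 1}` obtained by repeating a
nonempty word `w`. -/
def perSeq {M N : ℕ} (w : List (DMSym M N)) (hw : w ≠ []) : ℤ → DMSym M N := fun i =>
  w.get ⟨(i % (w.length : ℤ)).toNat, by
    have h0 : 0 < w.length := List.length_pos_iff.mpr hw
    have h1 : (0 : ℤ) < (w.length : ℤ) := by exact_mod_cast h0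
    have h2 : 0 ≤ i % (w.length : ℤ) := Int.emod_nonneg i (ne_of_gt h1)
    have h3 : i % (w.length : ℤ) < (w.length : ℤ) := Int.emod_lt_of_pos i h1
    omega⟩

section DMAux

variable {M N : ℕ}

/-- Cancellation of a reversed `α`-list against a `β`-list. -/
def glue : List (Fin M) → List (Fin M) → Option (List (Fin M) × List (Fin M))
  | [], bs => some ([], bs)
  | ras, [] => some (ras, [])
  | j :: ras, k :: bs => if j = k then glue ras bs else none

@[simp] lemma glue_nil_left (bs : List (Fin M)) : glue [] bs = some ([], bs) := by
  cases bs <;> rfl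

@[simp] lemma glue_nil_right (ras : List (Fin M)) : glue ras [] = some (ras, []) := by
  cases ras <;> rfl

@[simp] lemma glue_cons_cons (j k : Fin M) (ras bs : List (Fin M)) :
    glue (j :: ras) (k :: bs) = if j = k then glue ras bs else none := rfl

lemma glue_snd_nil {j : Fin M} {ras bs rest bs₁ : List (Fin M)}
    (h : glue ras bs = some (j :: rest, bs₁)) : bs₁ = [] := by
  induction ras generalizing bs j rest with
  | nil => simp at h
  | cons j' ras' ih =>
    cases bs with
    | nil => simp at h; exact h.2
    | cons b bs' =>
      by_cases hb : j' = b
      · rw [glue_cons_cons, if_pos hb] at h; exact ih h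
      · rw [glue_cons_cons, if_neg hb] at h; exact absurd h (by simp)

lemma glue_concat (ras bs : List (Fin M)) (k : Fin M) :
    glue ras (bs ++ [k]) =
      match glue ras bs with
      | none => none
      | some ([], bs₁) => some ([], bs₁ ++ [k])
      | some (j :: rest, _) => if j = k then some (rest, []) else none := by
  induction ras generalizing bs with
  | nil => simp
  | cons j rest ih =>
    cases bs with
    | nil => simp
    | cons b bs' =>
      by_cases hjb : j = b
      · subst hjb
        simp only [List.cons_append, glue_cons_cons, if_pos rfl]
        exact ih bs'
      · simp [hjb]

/-- Multiplication in the Dyck–Motzkin monoid with zero, in normal form. -/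
def dmul : DyckElem M → DyckElem M → DyckElem M
  | none, _ => none
  | some _, none => none
  | some (bs, as), some (bs', as') =>
      match glue as.reverse bs' with
      | none => none
      | some (ras₁, bs₁) => some (bs ++ bs₁, ras₁.reverse ++ as')

@[simp] lemma dmul_none_left (d : DyckElem M) : dmul none d = none := rfl
@[simp] lemma dmul_none_right (e : DyckElem M) : dmul e none = none := by
  cases e with
  | none => rfl
  | some p => rfl

lemma dmul_some_some (bs as bs' as' : List (Fin M)) :
    dmul (some (bs, as)) (some (bs', as')) =
      match glue as.reverse bs' with
      | none => none
      | some (ras₁, bs₁) => some (bs ++ bs₁, ras₁.reverse ++ as') := rfl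

@[simp] lemma dmul_one_left (d : DyckElem M) : dmul (some ([], [])) d = d := by
  cases d with
  | none => rfl
  | some p => obtain ⟨bs', as'⟩ := p; simp [dmul_some_some]

lemma dyckStep_dmul (e d : DyckElem M) (s : DMSym M N) :
    dyckStep (dmul e d) s = dmul e (dyckStep d s) := by
  cases e with
  | none => simp [dyckStep]
  | some p =>
    obtain ⟨bs, as⟩ := p
    cases d with
    | none => simp [dyckStep]
    | some q =>
      obtain ⟨bs', as'⟩ := q
      cases s with
      | u k =>
        show dyckStep (dmul _ _) _ = dmul _ (some (bs', as'))
        rw [dmul_some_some]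
        cases hg : glue as.reverse bs' with
        | none => rfl
        | some p => obtain ⟨ras₁, bs₁⟩ := p; simp [dyckStep, dmul_some_some, hg]
      | la k =>
        show dyckStep (dmul _ _) _ = dmul _ (some (bs', as' ++ [k]))
        rw [dmul_some_some, dmul_some_some]
        cases hg : glue as.reverse bs' with
        | none => rfl
        | some p =>
          obtain ⟨ras₁, bs₁⟩ := p
          simp [dyckStep, List.append_assoc]
      | ra k =>
        cases as' using List.reverseRecOn with
        | nil =>
          show dyckStep (dmul _ _) _ = dmul _ (dyckStep (some (bs', [])) _)
          have hstep : dyckStep (some (bs', ([] : List (Fin M)))) (DMSym.ra k : DMSym M N)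
              = some (bs' ++ [k], []) := rfl
          rw [hstep, dmul_some_some, dmul_some_some, glue_concat]
          cases hg : glue as.reverse bs' with
          | none => rfl
          | some p =>
            obtain ⟨ras₁, bs₁⟩ := p
            cases ras₁ with
            | nil => simp [dyckStep, List.append_assoc]
            | cons j rest =>
              obtain rfl : bs₁ = [] := glue_snd_nil hg
              by_cases hjk : j = k
              · subst hjk
                simp [dyckStep, List.getLast?_concat, List.dropLast_concat]
              · simp [dyckStep, List.getLast?_concat, hjk]
        | append_singleton as'' j =>
          have hstep : dyckStep (some (bs', as'' ++ [j])) (DMSym.ra k : DMSym M N)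
              = if j = k then some (bs', as'') else none := by
            simp [dyckStep, List.getLast?_concat, List.dropLast_concat]
          rw [hstep]
          by_cases hjk : j = k
          · subst hjk
            rw [if_pos rfl, dmul_some_some, dmul_some_some]
            cases hg : glue as.reverse bs' with
            | none => rfl
            | some p =>
              obtain ⟨ras₁, bs₁⟩ := p
              have : ras₁.reverse ++ (as'' ++ [j]) = (ras₁.reverse ++ as'') ++ [j] := by
                simp [List.append_assoc]
              simp only [this]
              simp [dyckStep, List.getLast?_concat, List.dropLast_concat]
          · rw [if_neg hjk, dmul_none_right, dmul_some_some]
            cases hg : glue as.reverse bs' with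
            | none => rfl
            | some p =>
              obtain ⟨ras₁, bs₁⟩ := p
              have : ras₁.reverse ++ (as'' ++ [j]) = (ras₁.reverse ++ as'') ++ [j] := by
                simp [List.append_assoc]
              simp only [this]
              simp [dyckStep, List.getLast?_concat, hjk]

lemma foldl_dyckStep_eq (e : DyckElem M) (v : List (DMSym M N)) :
    v.foldl dyckStep e = dmul e (red v) := by
  induction v using List.reverseRecOn with
  | nil =>
    show e = dmul e (some ([], []))
    cases e with
    | none => rfl
    | some p => obtain ⟨bs, as⟩ := p; simp [dmul_some_some]
  | append_singleton v s ih =>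
    rw [List.foldl_append, List.foldl_cons, List.foldl_nil, ih, dyckStep_dmul]
    congr 1
    show dyckStep (red v) s = red (v ++ [s])
    simp [red, List.foldl_append]

lemma red_append (u v : List (DMSym M N)) : red (u ++ v) = dmul (red u) (red v) := by
  rw [red, List.foldl_append]
  exact foldl_dyckStep_eq _ _

end DMAux

section DMAux2

variable {M N : ℕ}

lemma red_factor {u v z : List (DMSym M N)} (h : red (u ++ (v ++ z)) ≠ none) :
    red v ≠ none := by
  rw [red_append, red_append] at h
  intro hv
  rw [hv] at h
  simp at h

lemma red_flatten_neg {w : List (DMSym M N)} {as : List (Fin M)}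
    (hw : red w = some ([], as)) (n : ℕ) :
    ∃ as', red (List.replicate n w).flatten = some ([], as') := by
  induction n with
  | zero => exact ⟨[], rfl⟩
  | succ n ih =>
    obtain ⟨as', hih⟩ := ih
    refine ⟨as ++ as', ?_⟩
    rw [List.replicate_succ, List.flatten_cons, red_append, hw, hih]
    simp [dmul_some_some]

lemma red_flatten_pos {w : List (DMSym M N)} {bs : List (Fin M)}
    (hw : red w = some (bs, [])) (n : ℕ) :
    ∃ bs', red (List.replicate n w).flatten = some (bs', []) := by
  induction n with
  | zero => exact ⟨[], rfl⟩
  | succ n ih =>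
    obtain ⟨bs', hih⟩ := ih
    refine ⟨bs ++ bs', ?_⟩
    rw [List.replicate_succ, List.flatten_cons, red_append, hw, hih]
    simp [dmul_some_some]

lemma wordAt_eq (x : ℤ → DMSym M N) (j k : ℤ) :
    wordAt x j k = (List.range (k + 1 - j).toNat).map (fun n : ℕ => x (j + (n : ℤ))) := by
  unfold wordAt
  simp only [bind_pure_comp, List.map_eq_map, List.map_map]
  rfl

lemma length_wordAt (x : ℤ → DMSym M N) (j k : ℤ) :
    (wordAt x j k).length = (k + 1 - j).toNat := by simp [wordAt_eq]

lemma getElem_wordAt (x : ℤ → DMSym M N) (j k : ℤ) (i : ℕ)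
    (h : i < (wordAt x j k).length) : (wordAt x j k)[i] = x (j + (i : ℤ)) := by
  simp [wordAt_eq]

lemma wordAt_append' (x : ℤ → DMSym M N) {j m k : ℤ} (h1 : j - 1 ≤ m) (h2 : m ≤ k) :
    wordAt x j k = wordAt x j m ++ wordAt x (m + 1) k := by
  apply List.ext_getElem
  · simp [length_wordAt]; omega
  · intro i hL hR
    rw [getElem_wordAt]
    have hlen : (wordAt x j m).length = (m + 1 - j).toNat := length_wordAt x j m
    rcases lt_or_ge i (m + 1 - j).toNat with hi | hi
    · rw [List.getElem_append_left (by omega : i < (wordAt x j m).length), getElem_wordAt]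
    · rw [List.getElem_append_right (by omega : (wordAt x j m).length ≤ i), getElem_wordAt]
      congr 1
      rw [hlen]
      have hiL : i < (k + 1 - j).toNat := by
        have := length_wordAt x j k; omega
      push_cast [hi]
      omega

lemma length_flatten_replicate {α : Type*} (n : ℕ) (w : List α) :
    ((List.replicate n w).flatten).length = n * w.length := by
  induction n with
  | zero => simp
  | succ n ih => rw [List.replicate_succ, List.flatten_cons, List.length_append, ih]; ring

lemma getElem_flatten_replicate {α : Type*} (w : List α) (hw : w ≠ []) (n i : ℕ)
    (hi : i < ((List.replicate n w).flatten).length) :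
    ((List.replicate n w).flatten)[i]
      = w[i % w.length]'(Nat.mod_lt _ (List.length_pos_iff.mpr hw)) := by
  induction n generalizing i with
  | zero => simp at hi
  | succ n ih =>
    have key : (List.replicate (n + 1) w).flatten = w ++ (List.replicate n w).flatten := by
      rw [List.replicate_succ, List.flatten_cons]
    have hi' : i < (w ++ (List.replicate n w).flatten).length := by
      rwa [key] at hi
    rw [List.getElem_of_eq key hi]
    by_cases hiw : i < w.length
    · rw [List.getElem_append_left hiw]
      congr 1
      exact (Nat.mod_eq_of_lt hiw).symm
    · push_neg at hiw
      rw [List.getElem_append_right hiw]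
      rw [ih (i - w.length) (by simp only [List.length_append] at hi'; omega)]
      congr 1
      exact (Nat.mod_eq_sub_mod hiw).symm

lemma perSeq_apply_aligned (w : List (DMSym M N)) (hw : w ≠ []) (q : ℤ) (i : ℕ) :
    perSeq w hw ((w.length : ℤ) * q + (i : ℤ))
      = w[i % w.length]'(Nat.mod_lt _ (List.length_pos_iff.mpr hw)) := by
  show w.get _ = _
  simp only [List.get_eq_getElem]
  have h1 : ((w.length : ℤ) * q + (i : ℤ)) % (w.length : ℤ) = (i : ℤ) % (w.length : ℤ) := by
    rw [add_comm]
    exact Int.add_mul_emod_self_left _ _ _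
  have h2 : ((w.length : ℤ) * q + (i : ℤ)) % (w.length : ℤ) = ((i % w.length : ℕ) : ℤ) := by
    rw [h1]; push_cast; ring
  have h3 : (((w.length : ℤ) * q + (i : ℤ)) % (w.length : ℤ)).toNat = i % w.length := by
    rw [h2, Int.toNat_natCast]
  simp only [h3]

lemma wordAt_perSeq_aligned (w : List (DMSym M N)) (hw : w ≠ []) (q : ℤ) (n : ℕ) :
    wordAt (perSeq w hw) ((w.length : ℤ) * q)
        ((w.length : ℤ) * q + (n * w.length : ℕ) - 1)
      = (List.replicate n w).flatten := by
  have hL0 : 0 < w.length := List.length_pos_iff.mpr hw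
  have hval : ((w.length : ℤ) * q + (n * w.length : ℕ) - 1) + 1 - (w.length : ℤ) * q
      = ((n * w.length : ℕ) : ℤ) := by ring
  have hlen : (((w.length : ℤ) * q + (n * w.length : ℕ) - 1) + 1
      - (w.length : ℤ) * q).toNat = n * w.length := by
    rw [hval, Int.toNat_natCast]
  apply List.ext_getElem
  · rw [length_wordAt, hlen, length_flatten_replicate]
  · intro i h1 h2
    rw [getElem_wordAt, perSeq_apply_aligned w hw q i, getElem_flatten_replicate w hw n i h2]

end DMAux2

/-- If a word is neutral, negative or positive, then every `n`-fold concatenation of it is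
an admissible word of `Σ_D`, and the bi-infinite periodic sequence obtained by repeating it
belongs to `Σ_D`. -/
theorem periodic_words_admissible (M N : ℕ) (hM : 2 ≤ M)
    (w : List (DMSym M N)) (hw : w ≠ [])
    (h : NeutralWord w ∨ NegativeWord w ∨ PositiveWord w) :
    (∀ n : ℕ, 1 ≤ n → AdmissibleWord M N (List.replicate n w).flatten) ∧
    perSeq w hw ∈ SigmaD M N := by
  have hL0 : 0 < w.length := List.length_pos_iff.mpr hw
  have hform : (∃ as, red w = some ([], as)) ∨ (∃ bs, red w = some (bs, [])) := by
    rcases h with h | h | h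
    · exact Or.inl ⟨[], h⟩
    · obtain ⟨as, _, h⟩ := h; exact Or.inl ⟨as, h⟩
    · obtain ⟨bs, _, h⟩ := h; exact Or.inr ⟨bs, h⟩
  have hrep : ∀ n : ℕ, red (List.replicate n w).flatten ≠ none := by
    intro n
    rcases hform with ⟨as, hw'⟩ | ⟨bs, hw'⟩
    · obtain ⟨as', h'⟩ := red_flatten_neg hw' n; simp [h']
    · obtain ⟨bs', h'⟩ := red_flatten_pos hw' n; simp [h']
  have hmem : perSeq w hw ∈ SigmaD M N := by
    intro j k hjk
    have hL : (0 : ℤ) < (w.length : ℤ) := by exact_mod_cast hL0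
    obtain ⟨a, haq⟩ : ∃ a : ℤ, a = (w.length : ℤ) * (j / (w.length : ℤ)) := ⟨_, rfl⟩
    have ha : a ≤ j := by
      have h1 := Int.emod_nonneg j (ne_of_gt hL)
      have h2 := Int.mul_ediv_add_emod j (w.length : ℤ)
      omega
    set n : ℕ := (k + 1 - a).toNat with hn
    have hnmul : (n : ℤ) ≤ ((n * w.length : ℕ) : ℤ) := by
      exact_mod_cast Nat.le_mul_of_pos_right n hL0
    have hb : k ≤ a + ((n * w.length : ℕ) : ℤ) - 1 := by omega
    have key := wordAt_perSeq_aligned w hw (j / (w.length : ℤ)) n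
    rw [← haq] at key
    have hred0 : red (wordAt (perSeq w hw) a (a + ((n * w.length : ℕ) : ℤ) - 1)) ≠ none := by
      rw [key]; exact hrep n
    rw [wordAt_append' (perSeq w hw) (by omega : a - 1 ≤ j - 1)
        (by omega : j - 1 ≤ a + ((n * w.length : ℕ) : ℤ) - 1),
      (by ring : j - 1 + 1 = j),
      wordAt_append' (perSeq w hw) (by omega : j - 1 ≤ k)
        (by omega : k ≤ a + ((n * w.length : ℕ) : ℤ) - 1)] at hred0
    exact red_factor hred0
  refine ⟨fun n _ => ⟨perSeq w hw, hmem, 0, fun i => ?_⟩, hmem⟩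
  have hi : (i : ℕ) < (List.replicate n w).flatten.length := i.isLt
  have h0 : (0 : ℤ) + ((i : ℕ) : ℤ) = (w.length : ℤ) * 0 + ((i : ℕ) : ℤ) := by ring
  rw [h0, perSeq_apply_aligned w hw 0 (i : ℕ), List.get_eq_getElem,
    getElem_flatten_replicate w hw n (i : ℕ) hi]
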